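/- Let N ≥ 1, let F : ℝᴺ → ℝᴺ be differentiable at v ∈ ℝᴺ, let v̇, v̈ ∈ ℝᴺ, and define ψ(α) = ‖F(v − v̇ sin α + v̈ (1 − cos α))‖². Then ψ is differentiable at α = 0 with ψ'(0) = −2⟨F(v), F'(v)v̇⟩. Moreover, if F'(v)v̇ = F(v) − σμ ē for real numbers σ, μ and a vector ē ∈ ℝᴺ satisfying ⟨F(v), ē⟩ = pμ for an integer p ≥ 1, then ψ'(0) = −2(‖F(v)‖² − σ p μ²); and if additionally p μ² ≤ ‖F(v)‖² and σ ∈ (0,1), then ψ'(0) ≤ −2‖F(v)‖²(1 − σ). -/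

import Mathlib

open scoped RealInnerProductSpace

/-- Derivative at `α = 0` of the merit function `ψ(α) = ‖F(v − v̇ sin α + v̈(1 − cos α))‖²`
along the arc: `ψ'(0) = −2⟨F(v), F'(v)v̇⟩`; if moreover `F'(v)v̇ = F(v) − σμē` with
`⟨F(v), ē⟩ = pμ`, then `ψ'(0) = −2(‖F(v)‖² − σpμ²)`, and if additionally
`pμ² ≤ ‖F(v)‖²` and `σ ∈ (0,1)`, then `ψ'(0) ≤ −2‖F(v)‖²(1 − σ)`. -/
theorem merit_directional_derivative (N p : ℕ) (hN : 1 ≤ N) (hp : 1 ≤ p)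
    (F : EuclideanSpace ℝ (Fin N) → EuclideanSpace ℝ (Fin N))
    (v vdot vddot ebar : EuclideanSpace ℝ (Fin N))
    (hF : DifferentiableAt ℝ F v) (σ μ : ℝ)
    (ψ : ℝ → ℝ)
    (hψ : ∀ α : ℝ, ψ α =
      ‖F (v - Real.sin α • vdot + (1 - Real.cos α) • vddot)‖ ^ 2) :
    HasDerivAt ψ (-2 * ⟪F v, fderiv ℝ F v vdot⟫) 0 ∧
    (fderiv ℝ F v vdot = F v - (σ * μ) • ebar →
      ⟪F v, ebar⟫ = p * μ →
      deriv ψ 0 = -2 * (‖F v‖ ^ 2 - σ * p * μ ^ 2) ∧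
      ((p : ℝ) * μ ^ 2 ≤ ‖F v‖ ^ 2 → σ ∈ Set.Ioo (0 : ℝ) 1 →
        deriv ψ 0 ≤ -2 * (‖F v‖ ^ 2 * (1 - σ)))) := by
  set γ : ℝ → EuclideanSpace ℝ (Fin N) :=
    fun α => v - Real.sin α • vdot + (1 - Real.cos α) • vddot with hγ
  have hγ0 : γ 0 = v := by simp [hγ]
  have hγd : HasDerivAt γ (-vdot) 0 := by
    have h1 : HasDerivAt (fun α : ℝ => Real.sin α • vdot) ((Real.cos 0) • vdot) 0 :=
      (Real.hasDerivAt_sin 0).smul_const vdot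
    have h2 : HasDerivAt (fun α : ℝ => (1 - Real.cos α) • vddot)
        ((Real.sin 0) • vddot) 0 := by
      have : HasDerivAt (fun α : ℝ => 1 - Real.cos α) (Real.sin 0) 0 := by
        simpa using (Real.hasDerivAt_cos 0).const_sub 1
      exact this.smul_const vddot
    have := ((hasDerivAt_const (0:ℝ) v).sub h1).add h2
    exact this.congr_deriv (by simp)
  have hFc : HasDerivAt (fun α => F (γ α)) (fderiv ℝ F v (-vdot)) 0 := by
    have hF' : HasFDerivAt F (fderiv ℝ F v) (γ 0) := hγ0 ▸ hF.hasFDerivAt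
    exact hF'.comp_hasDerivAt 0 hγd
  have hψd : HasDerivAt ψ (-2 * ⟪F v, fderiv ℝ F v vdot⟫) 0 := by
    have hinner := hFc.inner ℝ hFc
    have heq : (fun α => ⟪F (γ α), F (γ α)⟫) = ψ := by
      funext α
      rw [hψ α, real_inner_self_eq_norm_sq]
    rw [heq] at hinner
    refine hinner.congr_deriv ?_
    rw [hγ0, map_neg]
    simp only [inner_neg_left, inner_neg_right]
    rw [real_inner_comm (F v) ((fderiv ℝ F v) vdot)]
    ring
  refine ⟨hψd, fun hNewton hpe => ?_⟩
  have hderiv : deriv ψ 0 = -2 * (‖F v‖ ^ 2 - σ * p * μ ^ 2) := by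
    rw [hψd.deriv, hNewton, inner_sub_right, real_inner_smul_right, hpe,
      real_inner_self_eq_norm_sq]
    ring
  refine ⟨hderiv, fun hCS hσ => ?_⟩
  rw [hderiv]
  obtain ⟨hσ0, hσ1⟩ := hσ
  nlinarith [hCS, hσ0, hσ1]
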